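/- Let X ∈ ℝ_+^{V×D} and let λ_d := Σ_v x_{vd} > 0 for every d. Suppose (W, H) is a global minimizer of D_KL(X‖WH) over the set {(W, H) : every column of W lies in Δ_{V−1}, H ∈ ℝ_+^{K×D}}. Define H̃ by h̃_{kd} = h_{kd}/λ_d. Then every column of H̃ lies in Δ_{K−1}, and (W, H̃) is a global minimizer of D_KL(X‖WH) over the set {(W, H) : every column of W lies in Δ_{V−1} and every column of H lies in Δ_{K−1}}. Conversely, if (W, H) is a global minimizer over the doubly constrained set, then (W, H̃) with h̃_{kd} = λ_d h_{kd} is a global minimizer over the set where only the columns of W are constrained to lie in Δ_{V−1}. -/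

import Mathlib

/-- Matrix product `(WH)_{vd} = ∑ k, w_{vk} h_{kd}`. -/
noncomputable def matMul {V K D : ℕ} (W : Fin V → Fin K → ℝ) (H : Fin K → Fin D → ℝ) :
    Fin V → Fin D → ℝ := fun v d => ∑ k, W v k * H k d

/-- A single term `x log(x/y) - x + y` of the generalized Kullback--Leibler divergence,
with the conventions `0 log 0 = 0` and `x log(x/0) = +∞` for `x > 0`. -/
noncomputable def klTerm (x y : ℝ) : EReal :=
  if x = 0 then (y : EReal)
  else if y = 0 then ⊤
  else ((x * Real.log (x / y) - x + y : ℝ) : EReal)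

/-- Generalized Kullback--Leibler divergence `D_KL(X ‖ Y)`. -/
noncomputable def klDiv {V D : ℕ} (X Y : Fin V → Fin D → ℝ) : EReal :=
  ∑ v, ∑ d, klTerm (X v d) (Y v d)

private lemma ereal_coe_sum {ι : Type*} (s : Finset ι) (f : ι → ℝ) :
    ((∑ i ∈ s, f i : ℝ) : EReal) = ∑ i ∈ s, ((f i : ℝ) : EReal) :=
  map_sum (⟨⟨Real.toEReal, EReal.coe_zero⟩, EReal.coe_add⟩ : ℝ →+ EReal) f s

private lemma klTerm_ne_bot (x y : ℝ) : klTerm x y ≠ ⊥ := by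
  unfold klTerm
  split_ifs
  · exact EReal.coe_ne_bot _
  · exact top_ne_bot
  · exact EReal.coe_ne_bot _

private lemma klTerm_ne_top {x y : ℝ} (hy : y ≠ 0) : klTerm x y ≠ ⊤ := by
  unfold klTerm
  split_ifs with h1
  · exact EReal.coe_ne_top _
  · exact EReal.coe_ne_top _

private lemma sum_ne_bot' {ι : Type*} {s : Finset ι} {f : ι → EReal}
    (h : ∀ i ∈ s, f i ≠ ⊥) : ∑ i ∈ s, f i ≠ ⊥ := by
  classical
  induction s using Finset.induction with
  | empty => simp
  | insert a s' hi ih =>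
    rw [Finset.sum_insert hi, Ne, EReal.add_eq_bot_iff]
    push_neg
    exact ⟨h _ (Finset.mem_insert_self _ _), ih fun i hi' => h i (Finset.mem_insert_of_mem hi')⟩

private lemma sum_ne_top' {ι : Type*} {s : Finset ι} {f : ι → EReal}
    (h : ∀ i ∈ s, f i ≠ ⊤) : ∑ i ∈ s, f i ≠ ⊤ := by
  classical
  induction s using Finset.induction with
  | empty => simp
  | insert a s' hi ih =>
    rw [Finset.sum_insert hi]
    exact (EReal.add_lt_top (h _ (Finset.mem_insert_self _ _))
      (ih fun i hi' => h i (Finset.mem_insert_of_mem hi'))).ne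

private lemma sum_eq_top' {ι : Type*} {s : Finset ι} {f : ι → EReal}
    (h : ∀ i ∈ s, f i ≠ ⊥) {i₀ : ι} (hi₀ : i₀ ∈ s) (htop : f i₀ = ⊤) :
    ∑ i ∈ s, f i = ⊤ := by
  classical
  rw [← Finset.add_sum_erase _ _ hi₀, htop]
  exact EReal.top_add_of_ne_bot (sum_ne_bot' fun i hi => h i (Finset.mem_of_mem_erase hi))

private lemma klDiv_ne_bot {V D : ℕ} (X Y : Fin V → Fin D → ℝ) : klDiv X Y ≠ ⊥ :=
  sum_ne_bot' fun v _ => sum_ne_bot' fun d _ => klTerm_ne_bot _ _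

private lemma klDiv_ne_top_of_pos {V D : ℕ} (X Y : Fin V → Fin D → ℝ)
    (hY : ∀ v d, 0 < Y v d) : klDiv X Y ≠ ⊤ :=
  sum_ne_top' fun v _ => sum_ne_top' fun d _ => klTerm_ne_top (hY v d).ne'

private lemma klDiv_eq_top {V D : ℕ} (X Y : Fin V → Fin D → ℝ) (v₀ : Fin V) (d₀ : Fin D)
    (h : klTerm (X v₀ d₀) (Y v₀ d₀) = ⊤) : klDiv X Y = ⊤ :=
  sum_eq_top' (fun v _ => sum_ne_bot' fun d _ => klTerm_ne_bot _ _) (Finset.mem_univ v₀)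
    (sum_eq_top' (fun d _ => klTerm_ne_bot _ _) (Finset.mem_univ d₀) h)

private lemma ereal_cancel {x y : EReal} {r s : ℝ} (h : x ≤ y + (s : EReal))
    (hrs : r + s ≤ 0) : x + (r : EReal) ≤ y := by
  induction y using EReal.rec with
  | top => exact le_top
  | bot =>
    rw [EReal.bot_add] at h
    rw [le_bot_iff.mp h, EReal.bot_add]
  | coe b =>
    induction x using EReal.rec with
    | bot => rw [EReal.bot_add]; exact bot_le
    | top => rw [← EReal.coe_add] at h; exact ((EReal.coe_lt_top _).not_ge h).elim
    | coe a =>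
      rw [← EReal.coe_add] at h ⊢
      rw [EReal.coe_le_coe_iff] at h ⊢
      linarith

private lemma nonneg_of_le_add {x : EReal} (hbot : x ≠ ⊥) (htop : x ≠ ⊤) {r : ℝ}
    (h : x ≤ x + (r : EReal)) : 0 ≤ r := by
  lift x to ℝ using ⟨htop, hbot⟩
  rw [← EReal.coe_add, EReal.coe_le_coe_iff] at h
  linarith

private lemma klTerm_scale {c : ℝ} (hc : c ≠ 0) (x y : ℝ) :
    klTerm x (c * y) = klTerm x y + (((c - 1) * y - x * Real.log c : ℝ) : EReal) := by
  unfold klTerm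
  by_cases hx : x = 0
  · rw [if_pos hx, if_pos hx, hx, ← EReal.coe_add, EReal.coe_eq_coe_iff]
    ring
  · by_cases hy : y = 0
    · rw [if_neg hx, if_neg hx, if_pos (by rw [hy, mul_zero]), if_pos hy]
      rw [hy]
      exact (EReal.top_add_of_ne_bot (EReal.coe_ne_bot _)).symm
    · have hcy : c * y ≠ 0 := mul_ne_zero hc hy
      rw [if_neg hx, if_neg hx, if_neg hcy, if_neg hy, ← EReal.coe_add,
        EReal.coe_eq_coe_iff]
      have hlog : Real.log (x / (c * y)) = Real.log (x / y) - Real.log c := by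
        rw [show x / (c * y) = x / y / c by rw [mul_comm c y, ← div_div],
          Real.log_div (div_ne_zero hx hy) hc]
      rw [hlog]; ring

private lemma klDiv_scale {V D : ℕ} (X Y Y' : Fin V → Fin D → ℝ) (c : Fin D → ℝ)
    (hc : ∀ d, c d ≠ 0) (hY' : ∀ v d, Y' v d = c d * Y v d) :
    klDiv X Y' =
      klDiv X Y +
        ((∑ d, ((c d - 1) * (∑ v, Y v d) - (∑ v, X v d) * Real.log (c d)) : ℝ) : EReal) := by
  unfold klDiv
  have h1 : ∀ v d, klTerm (X v d) (Y' v d)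
      = klTerm (X v d) (Y v d) + (((c d - 1) * Y v d - X v d * Real.log (c d) : ℝ) : EReal) :=
    fun v d => by rw [hY' v d]; exact klTerm_scale (hc d) _ _
  simp_rw [h1, Finset.sum_add_distrib]
  congr 1
  rw [show (∑ v, ∑ d, (((c d - 1) * Y v d - X v d * Real.log (c d) : ℝ) : EReal))
      = ((∑ v, ∑ d, ((c d - 1) * Y v d - X v d * Real.log (c d)) : ℝ) : EReal) by
    rw [ereal_coe_sum]
    exact Finset.sum_congr rfl fun v _ => (ereal_coe_sum _ _).symm]
  refine congrArg Real.toEReal ?_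
  rw [Finset.sum_comm]
  refine Finset.sum_congr rfl fun d _ => ?_
  rw [Finset.sum_sub_distrib, ← Finset.mul_sum, ← Finset.sum_mul]

private lemma colsum {V K D : ℕ} (W : Fin V → Fin K → ℝ) (H : Fin K → Fin D → ℝ)
    (hW : ∀ k, (∑ v, W v k) = 1) (d : Fin D) :
    ∑ v, matMul W H v d = ∑ k, H k d := by
  unfold matMul
  rw [Finset.sum_comm]
  simp_rw [← Finset.sum_mul, hW, one_mul]

private lemma colsum_eq_lam {V K D : ℕ} (hK : 0 < K)
    (X : Fin V → Fin D → ℝ) (hlam : ∀ d, 0 < ∑ v, X v d)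
    (W : Fin V → Fin K → ℝ) (H : Fin K → Fin D → ℝ)
    (hW0 : ∀ v k, 0 ≤ W v k) (hW1 : ∀ k, (∑ v, W v k) = 1) (hH : ∀ k d, 0 ≤ H k d)
    (hmin : ∀ (W' : Fin V → Fin K → ℝ) (H' : Fin K → Fin D → ℝ),
      (∀ v k, 0 ≤ W' v k) → (∀ k, (∑ v, W' v k) = 1) → (∀ k d, 0 ≤ H' k d) →
      klDiv X (matMul W H) ≤ klDiv X (matMul W' H'))
    (d₀ : Fin D) : ∑ k, H k d₀ = ∑ v, X v d₀ := by
  have hV : 0 < V := by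
    rcases Nat.eq_zero_or_pos V with h | h
    · exfalso; have h2 := hlam d₀; subst h; simp at h2
    · exact h
  have hKpos : (0:ℝ) < K := Nat.cast_pos.mpr hK
  have hVpos : (0:ℝ) < V := Nat.cast_pos.mpr hV
  have hfin : klDiv X (matMul W H) ≠ ⊤ := by
    have hpos : ∀ (v : Fin V) (d : Fin D),
        0 < matMul (V := V) (K := K) (D := D) (fun _ _ => (V : ℝ)⁻¹) (fun _ _ => (1:ℝ)) v d := by
      intro v d
      simp only [matMul, mul_one, Finset.sum_const, Finset.card_univ, Fintype.card_fin,
        nsmul_eq_mul]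
      exact mul_pos hKpos (inv_pos.mpr hVpos)
    refine ne_top_of_le_ne_top (klDiv_ne_top_of_pos X _ hpos) (hmin _ _ ?_ ?_ ?_)
    · intro v k; positivity
    · intro k
      rw [Finset.sum_const, Finset.card_univ, Fintype.card_fin, nsmul_eq_mul]
      exact mul_inv_cancel₀ (Nat.cast_ne_zero.mpr hV.ne')
    · intro k d; exact zero_le_one
  set lam := ∑ v, X v d₀ with hlamdef
  set s := ∑ k, H k d₀ with hsdef
  have hlp : 0 < lam := hlam d₀
  have hs0 : 0 ≤ s := Finset.sum_nonneg fun k _ => hH k d₀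
  have key : ∀ t : ℝ, 0 < t → 0 ≤ (t - 1) * s - lam * Real.log t := by
    intro t ht
    set c : Fin D → ℝ := fun d => if d = d₀ then t else 1 with hcdef
    have hc : ∀ d, c d ≠ 0 := by
      intro d; simp only [hcdef]; split_ifs; exacts [ht.ne', one_ne_zero]
    have hY' : ∀ (u : Fin V) (d : Fin D),
        matMul W (fun k d => c d * H k d) u d = c d * matMul W H u d := by
      intro u d
      simp only [matMul, Finset.mul_sum]
      exact Finset.sum_congr rfl fun k _ => by ring
    have hle := hmin W (fun k d => c d * H k d) hW0 hW1
      (fun k d => mul_nonneg (by simp only [hcdef]; split_ifs; exacts [ht.le, zero_le_one])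
        (hH k d))
    rw [klDiv_scale X (matMul W H) _ c hc hY'] at hle
    have hsum : (∑ d, ((c d - 1) * (∑ v, matMul W H v d) - (∑ v, X v d) * Real.log (c d)))
        = (t - 1) * s - lam * Real.log t := by
      rw [Finset.sum_eq_single d₀]
      · rw [colsum W H hW1 d₀]
        simp only [hcdef, if_pos rfl, ← hsdef, ← hlamdef]
      · intro d _ hd
        simp [hcdef, if_neg hd]
      · intro h; exact absurd (Finset.mem_univ d₀) h
    rw [hsum] at hle
    exact nonneg_of_le_add (klDiv_ne_bot _ _) hfin hle
  rcases eq_or_lt_of_le hs0 with h0 | hspos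
  · exfalso
    have h1 := key (Real.exp 1) (Real.exp_pos 1)
    rw [← h0, Real.log_exp] at h1
    nlinarith
  · by_contra hne
    have h1 := key (lam / s) (div_pos hlp hspos)
    have hsl : s / lam ≠ 1 := by
      intro h
      exact hne ((div_eq_one_iff_eq hlp.ne').mp h)
    have h2 : Real.log (s / lam) < s / lam - 1 :=
      Real.log_lt_sub_one_of_pos (div_pos hspos hlp) hsl
    have hlog : Real.log (lam / s) = - Real.log (s / lam) := by
      rw [Real.log_div hlp.ne' hspos.ne', Real.log_div hspos.ne' hlp.ne']; ring
    rw [hlog] at h1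
    have h3 : (lam / s - 1) * s = lam - s := by field_simp
    rw [h3] at h1
    have h4 : lam * Real.log (s / lam) < lam * (s / lam - 1) :=
      mul_lt_mul_of_pos_left h2 hlp
    have h5 : lam * (s / lam - 1) = s - lam := by field_simp
    nlinarith

theorem nmf_normalizedWH_equivalence {V K D : ℕ} (hK : 0 < K)
    (X : Fin V → Fin D → ℝ) (hX : ∀ v d, 0 ≤ X v d)
    (hlam : ∀ d, 0 < ∑ v, X v d) :
    -- Forward direction: from a minimizer with only the columns of W constrained,
    -- dividing the columns of H by λ_d gives a minimizer of the doubly constrained problem.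
    (∀ (W : Fin V → Fin K → ℝ) (H : Fin K → Fin D → ℝ),
      (∀ v k, 0 ≤ W v k) → (∀ k, (∑ v, W v k) = 1) → (∀ k d, 0 ≤ H k d) →
      (∀ (W' : Fin V → Fin K → ℝ) (H' : Fin K → Fin D → ℝ),
        (∀ v k, 0 ≤ W' v k) → (∀ k, (∑ v, W' v k) = 1) → (∀ k d, 0 ≤ H' k d) →
        klDiv X (matMul W H) ≤ klDiv X (matMul W' H')) →
      -- every column of H̃ lies in the simplex Δ_{K-1}
      ((∀ k d, 0 ≤ H k d / ∑ v, X v d) ∧ (∀ d, (∑ k, H k d / ∑ v, X v d) = 1) ∧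
      -- (W, H̃) is a global minimizer of the doubly constrained problem
      (∀ (W' : Fin V → Fin K → ℝ) (H' : Fin K → Fin D → ℝ),
        (∀ v k, 0 ≤ W' v k) → (∀ k, (∑ v, W' v k) = 1) →
        (∀ k d, 0 ≤ H' k d) → (∀ d, (∑ k, H' k d) = 1) →
        klDiv X (matMul W (fun k d => H k d / ∑ v, X v d))
          ≤ klDiv X (matMul W' H')))) ∧
    -- Converse direction: from a minimizer of the doubly constrained problem,
    -- multiplying the columns of H by λ_d gives a minimizer of the problem where
    -- only the columns of W are constrained.
    (∀ (W : Fin V → Fin K → ℝ) (H : Fin K → Fin D → ℝ),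
      (∀ v k, 0 ≤ W v k) → (∀ k, (∑ v, W v k) = 1) →
      (∀ k d, 0 ≤ H k d) → (∀ d, (∑ k, H k d) = 1) →
      (∀ (W' : Fin V → Fin K → ℝ) (H' : Fin K → Fin D → ℝ),
        (∀ v k, 0 ≤ W' v k) → (∀ k, (∑ v, W' v k) = 1) →
        (∀ k d, 0 ≤ H' k d) → (∀ d, (∑ k, H' k d) = 1) →
        klDiv X (matMul W H) ≤ klDiv X (matMul W' H')) →
      (∀ (W' : Fin V → Fin K → ℝ) (H' : Fin K → Fin D → ℝ),
        (∀ v k, 0 ≤ W' v k) → (∀ k, (∑ v, W' v k) = 1) → (∀ k d, 0 ≤ H' k d) →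
        klDiv X (matMul W (fun k d => (∑ v, X v d) * H k d))
          ≤ klDiv X (matMul W' H'))) := by
  constructor
  · -- Forward direction
    intro W H hW0 hW1 hH0 hmin
    have hs : ∀ d, ∑ k, H k d = ∑ v, X v d :=
      colsum_eq_lam hK X hlam W H hW0 hW1 hH0 hmin
    refine ⟨fun k d => div_nonneg (hH0 k d) (hlam d).le, fun d => ?_, ?_⟩
    · rw [← Finset.sum_div, hs d, div_self (hlam d).ne']
    · intro W' H' hW'0 hW'1 hH'0 hH'1
      have hc1 : ∀ d : Fin D, ((∑ v, X v d)⁻¹ : ℝ) ≠ 0 := fun d => inv_ne_zero (hlam d).ne'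
      have e1 : ∀ (u : Fin V) (d : Fin D),
          matMul W (fun k d => H k d / ∑ v, X v d) u d
            = (∑ v, X v d)⁻¹ * matMul W H u d := by
        intro u d
        simp only [matMul, Finset.mul_sum, div_eq_inv_mul]
        exact Finset.sum_congr rfl fun k _ => by ring
      have e2 : ∀ (u : Fin V) (d : Fin D),
          matMul W' (fun k d => (∑ v, X v d) * H' k d) u d
            = (∑ v, X v d) * matMul W' H' u d := by
        intro u d
        simp only [matMul, Finset.mul_sum]
        exact Finset.sum_congr rfl fun k _ => by ring
      have hle := hmin W' (fun k d => (∑ v, X v d) * H' k d) hW'0 hW'1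
        (fun k d => mul_nonneg (hlam d).le (hH'0 k d))
      rw [klDiv_scale X (matMul W' H') _ _ (fun d => (hlam d).ne') e2] at hle
      rw [klDiv_scale X (matMul W H) _ _ hc1 e1]
      refine ereal_cancel hle ?_
      rw [← Finset.sum_add_distrib]
      refine Finset.sum_nonpos fun d _ => ?_
      rw [colsum W H hW1 d, colsum W' H' hW'1 d, hs d, hH'1 d, Real.log_inv]
      have hl := (hlam d).ne'
      have e4 : ((∑ v, X v d)⁻¹ - 1) * (∑ v, X v d) = 1 - (∑ v, X v d) := by
        field_simp
      rw [e4]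
      ring_nf
      nlinarith [hlam d]
  · -- Converse direction
    intro W H hW0 hW1 hH0 hH1 hmin W' H' hW'0 hW'1 hH'0
    by_cases hpos : ∀ d, 0 < ∑ k, H' k d
    · have e2 : ∀ (u : Fin V) (d : Fin D),
          matMul W (fun k d => (∑ v, X v d) * H k d) u d
            = (∑ v, X v d) * matMul W H u d := by
        intro u d
        simp only [matMul, Finset.mul_sum]
        exact Finset.sum_congr rfl fun k _ => by ring
      have e3 : ∀ (u : Fin V) (d : Fin D),
          matMul W' (fun k d => H' k d / ∑ k', H' k' d) u d
            = (∑ k', H' k' d)⁻¹ * matMul W' H' u d := by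
        intro u d
        simp only [matMul, Finset.mul_sum, div_eq_inv_mul]
        exact Finset.sum_congr rfl fun k _ => by ring
      have hle := hmin W' (fun k d => H' k d / ∑ k', H' k' d) hW'0 hW'1
        (fun k d => div_nonneg (hH'0 k d) (hpos d).le)
        (fun d => by rw [← Finset.sum_div, div_self (hpos d).ne'])
      rw [klDiv_scale X (matMul W' H') _ _ (fun d => inv_ne_zero (hpos d).ne') e3] at hle
      rw [klDiv_scale X (matMul W H) _ _ (fun d => (hlam d).ne') e2]
      refine ereal_cancel hle ?_
      rw [← Finset.sum_add_distrib]
      refine Finset.sum_nonpos fun d _ => ?_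
      rw [colsum W H hW1 d, colsum W' H' hW'1 d, hH1 d, Real.log_inv]
      have hl := hlam d
      have hsd := hpos d
      have e4 : ((∑ k, H' k d)⁻¹ - 1) * (∑ k, H' k d) = 1 - (∑ k, H' k d) := by
        field_simp
      rw [e4]
      have e6 : Real.log ((∑ k, H' k d) / (∑ v, X v d))
          ≤ (∑ k, H' k d) / (∑ v, X v d) - 1 :=
        Real.log_le_sub_one_of_pos (div_pos hsd hl)
      rw [Real.log_div hsd.ne' hl.ne'] at e6
      have e8 : (∑ v, X v d) * ((∑ k, H' k d) / (∑ v, X v d) - 1)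
          = (∑ k, H' k d) - (∑ v, X v d) := by field_simp
      have e9 : (∑ v, X v d) * (Real.log (∑ k, H' k d) - Real.log (∑ v, X v d))
          ≤ (∑ k, H' k d) - (∑ v, X v d) := by
        calc (∑ v, X v d) * (Real.log (∑ k, H' k d) - Real.log (∑ v, X v d))
            ≤ (∑ v, X v d) * ((∑ k, H' k d) / (∑ v, X v d) - 1) :=
              mul_le_mul_of_nonneg_left e6 hl.le
          _ = (∑ k, H' k d) - (∑ v, X v d) := e8
      nlinarith [e9]
    · push_neg at hpos
      obtain ⟨d, hd⟩ := hpos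
      have hsum0 : ∑ k, H' k d = 0 :=
        le_antisymm hd (Finset.sum_nonneg fun k _ => hH'0 k d)
      have hH'z : ∀ k, H' k d = 0 := fun k =>
        (Finset.sum_eq_zero_iff_of_nonneg (fun k _ => hH'0 k d)).mp hsum0 k (Finset.mem_univ k)
      obtain ⟨v₀, hv₀⟩ : ∃ v, X v d ≠ 0 := by
        by_contra hall; push_neg at hall
        have h2 := hlam d
        rw [Finset.sum_eq_zero (fun v _ => hall v)] at h2
        exact lt_irrefl _ h2
      have hM0 : matMul W' H' v₀ d = 0 := by
        unfold matMul; exact Finset.sum_eq_zero fun k _ => by rw [hH'z k, mul_zero]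
      have htop : klDiv X (matMul W' H') = ⊤ :=
        klDiv_eq_top X _ v₀ d (by unfold klTerm; rw [if_neg hv₀, if_pos hM0])
      rw [htop]; exact le_top
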